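/- arXiv:math/0508219 — 3 statements merged into one kernel-verified Lean document; each statement's English description precedes it below -/
import Mathlib

section
/- For all real x and all y > 0, |Φ(x·y) − Φ(x)| ≤ 0.25 · max(|1 − y|, |1 − 1/y|), where Φ is the standard normal cumulative distribution function. -/
/-- The standard normal density. -/
noncomputable def stdNormalPDF (t : ℝ) : ℝ :=
  Real.exp (-t ^ 2 / 2) / Real.sqrt (2 * Real.pi)

/-- The standard normal cumulative distribution function. -/
noncomputable def stdNormalCDF (x : ℝ) : ℝ :=
  ∫ t in Set.Iic x, stdNormalPDF t

lemma stdNormalPDF_integrable : MeasureTheory.Integrable stdNormalPDF := by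
  have h : MeasureTheory.Integrable fun t : ℝ => Real.exp (-(1/2 : ℝ) * t ^ 2) :=
    integrable_exp_neg_mul_sq (by norm_num)
  have := h.div_const (Real.sqrt (2 * Real.pi))
  convert this using 2 with t
  unfold stdNormalPDF
  ring_nf

lemma stdNormalPDF_nonneg (t : ℝ) : 0 ≤ stdNormalPDF t := by
  unfold stdNormalPDF
  positivity

lemma stdNormalPDF_le (s t : ℝ) (h : s ^ 2 ≤ t ^ 2) : stdNormalPDF t ≤ stdNormalPDF s := by
  unfold stdNormalPDF
  gcongr


lemma mul_pdf_le (u : ℝ) (hu : 0 ≤ u) : u * stdNormalPDF u ≤ 0.25 := by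
  unfold stdNormalPDF
  have h1 : u * Real.exp (-u ^ 2 / 2) ≤ Real.exp (-(1/2) : ℝ) := by
    have e1 : 1 + (u^2-1)/2 ≤ Real.exp ((u^2-1)/2) := by
      have := Real.add_one_le_exp ((u^2-1)/2); linarith
    have e2 : Real.exp ((u^2-1)/2) = Real.exp (u^2/2) * Real.exp (-(1/2) : ℝ) := by
      rw [← Real.exp_add]; ring_nf
    have e3 : Real.exp (-u^2/2) * Real.exp (u^2/2) = 1 := by
      rw [← Real.exp_add]; ring_nf; exact Real.exp_zero
    have p1 : (0:ℝ) < Real.exp (-u^2/2) := Real.exp_pos _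
    have p2 : (0:ℝ) < Real.exp (u^2/2) := Real.exp_pos _
    have p3 : (0:ℝ) < Real.exp (-(1/2):ℝ) := Real.exp_pos _
    nlinarith [sq_nonneg (u - 1)]
  have hp : Real.pi > 3.141592 := Real.pi_gt_d6
  have he : Real.exp 1 > 2.7182818283 := Real.exp_one_gt_d9
  have p3 : (0:ℝ) < Real.exp (-(1/2):ℝ) := Real.exp_pos _
  have hinv : Real.exp (-(1/2):ℝ) * Real.exp (-(1/2):ℝ) * Real.exp 1 = 1 := by
    rw [← Real.exp_add, ← Real.exp_add]; norm_num
  have hq : (4 * Real.exp (-(1/2):ℝ))^2 ≤ 2*Real.pi := by nlinarith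
  have hs : 4 * Real.exp (-(1/2):ℝ) ≤ Real.sqrt (2 * Real.pi) := by
    calc 4 * Real.exp (-(1/2):ℝ) = Real.sqrt ((4*Real.exp (-(1/2):ℝ))^2) :=
          (Real.sqrt_sq (by positivity)).symm
      _ ≤ Real.sqrt (2*Real.pi) := Real.sqrt_le_sqrt hq
  have h2 : Real.exp (-(1/2) : ℝ) ≤ 0.25 * Real.sqrt (2 * Real.pi) := by linarith
  have h2p : (0:ℝ) < Real.sqrt (2 * Real.pi) := Real.sqrt_pos.2 (by positivity)
  have heq : u * (Real.exp (-u ^ 2 / 2) / Real.sqrt (2 * Real.pi))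
      = (u * Real.exp (-u ^ 2 / 2)) / Real.sqrt (2 * Real.pi) := by ring
  rw [heq, div_le_iff₀ h2p]
  calc u * Real.exp (-u^2/2) ≤ Real.exp (-(1/2):ℝ) := h1
    _ ≤ 0.25 * Real.sqrt (2 * Real.pi) := h2

theorem normal_cdf_scale_bound (x y : ℝ) (hy : 0 < y) :
    |stdNormalCDF (x * y) - stdNormalCDF x| ≤
      0.25 * max |1 - y| |1 - 1 / y| := by
  have hdiff : stdNormalCDF (x * y) - stdNormalCDF x = ∫ t in x..(x*y), stdNormalPDF t := by
    unfold stdNormalCDF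
    exact intervalIntegral.integral_Iic_sub_Iic stdNormalPDF_integrable.integrableOn
      stdNormalPDF_integrable.integrableOn
  have hbound : ∀ t ∈ Set.uIoc x (x*y), ‖stdNormalPDF t‖ ≤ stdNormalPDF (|x| * min 1 y) := by
    intro t ht
    rw [Real.norm_eq_abs, abs_of_nonneg (stdNormalPDF_nonneg t)]
    apply stdNormalPDF_le
    rw [Set.mem_uIoc] at ht
    have hmt : |x| * min 1 y ≤ |t| := by
      rcases le_or_gt 0 x with hx | hx
      · have ht' : x * min 1 y ≤ t := by
          rcases ht with ⟨h1, _⟩ | ⟨h1, _⟩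
          · calc x * min 1 y ≤ x * 1 := by nlinarith [min_le_left 1 y]
              _ = x := by ring
              _ ≤ t := h1.le
          · calc x * min 1 y ≤ x * y := by nlinarith [min_le_right 1 y]
              _ ≤ t := h1.le
        rw [abs_of_nonneg hx]
        exact ht'.trans (le_abs_self t)
      · have ht' : t ≤ x * min 1 y := by
          rcases ht with ⟨_, h2⟩ | ⟨_, h2⟩
          · calc t ≤ x * y := h2
              _ ≤ x * min 1 y := by nlinarith [min_le_right 1 y]
          · calc t ≤ x := h2
              _ = x * 1 := by ring
              _ ≤ x * min 1 y := by nlinarith [min_le_left 1 y]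
        rw [abs_of_neg hx]
        calc -x * min 1 y ≤ -t := by nlinarith
          _ ≤ |t| := neg_le_abs t
    have hm0 : (0:ℝ) ≤ |x| * min 1 y := by
      have : (0:ℝ) ≤ min 1 y := le_min zero_le_one hy.le
      positivity
    calc (|x| * min 1 y) ^ 2 ≤ |t| ^ 2 := by nlinarith [abs_nonneg t]
      _ = t ^ 2 := sq_abs t
  have hmain : |stdNormalCDF (x * y) - stdNormalCDF x| ≤
      stdNormalPDF (|x| * min 1 y) * |x * y - x| := by
    rw [hdiff, ← Real.norm_eq_abs]
    exact intervalIntegral.norm_integral_le_of_norm_le_const hbound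
  refine hmain.trans ?_
  rcases le_or_gt y 1 with h1 | h1
  · have hmin : min 1 y = y := min_eq_right h1
    rw [hmin] at hmain ⊢
    have key : (|x| * y) * stdNormalPDF (|x| * y) ≤ 0.25 := mul_pdf_le _ (by positivity)
    have habs : |x * y - x| = |x| * (1 - y) := by
      rw [show x * y - x = -(x * (1-y)) by ring, abs_neg, abs_mul,
        abs_of_nonneg (show (0:ℝ) ≤ 1 - y by linarith)]
    have h1y : |1 - 1/y| = (1 - y)/y := by
      rw [abs_of_nonpos, neg_sub]
      · field_simp
      · rw [sub_nonpos, le_div_iff₀ hy, one_mul]; exact h1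
    have step : stdNormalPDF (|x| * y) * |x * y - x| ≤ 0.25 * |1 - 1/y| := by
      rw [habs, h1y]
      have hfrac : (0:ℝ) ≤ (1-y)/y := div_nonneg (by linarith) hy.le
      calc stdNormalPDF (|x| * y) * (|x| * (1 - y))
          = ((|x| * y) * stdNormalPDF (|x| * y)) * ((1-y)/y) := by field_simp
        _ ≤ 0.25 * ((1-y)/y) := mul_le_mul_of_nonneg_right key hfrac
    refine step.trans ?_
    exact mul_le_mul_of_nonneg_left (le_max_right _ _) (by norm_num)
  · have hmin : min 1 y = 1 := min_eq_left h1.le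
    rw [hmin, mul_one] at hmain ⊢
    have key : |x| * stdNormalPDF |x| ≤ 0.25 := mul_pdf_le _ (abs_nonneg x)
    have habs : |x * y - x| = |x| * (y - 1) := by
      rw [show x * y - x = x * (y-1) by ring, abs_mul,
        abs_of_nonneg (show (0:ℝ) ≤ y - 1 by linarith)]
    have h1y : |1 - y| = y - 1 := by
      rw [abs_sub_comm, abs_of_nonneg (by linarith)]
    have step : stdNormalPDF |x| * |x * y - x| ≤ 0.25 * |1 - y| := by
      rw [habs, h1y]
      calc stdNormalPDF |x| * (|x| * (y - 1)) = (|x| * stdNormalPDF |x|) * (y-1) := by ring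
        _ ≤ 0.25 * (y-1) := mul_le_mul_of_nonneg_right key (by linarith)
    refine step.trans ?_
    exact mul_le_mul_of_nonneg_left (le_max_left _ _) (by norm_num)
end

section
/- Let n1, n2 > 0 and c1, c2, d1, d2 ≥ 0 with d1, d2 > 0. Then |sqrt((n1·c2² + n2·c1²)/(n1·d2² + n2·d1²)) − 1| ≤ |c1/d1 − 1| + |c2/d2 − 1|. -/
private lemma sqrt_quad_lip (a b x y : ℝ) (ha : 0 ≤ a) (hb : 0 ≤ b)
    (hx : 0 ≤ x) (hy : 0 ≤ y) :
    |Real.sqrt (a * x ^ 2 + b) - Real.sqrt (a * y ^ 2 + b)| ≤ Real.sqrt a * |x - y| := by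
  wlog hxy : y ≤ x generalizing x y
  · have := this y x hy hx (le_of_not_ge hxy)
    rwa [abs_sub_comm, abs_sub_comm y x] at this
  have key : ∀ u v : ℝ, 0 ≤ u → 0 ≤ v → v ≤ u →
      Real.sqrt (a * u ^ 2 + b) ≤ Real.sqrt (a * v ^ 2 + b) + Real.sqrt a * (u - v) := by
    intro u v hu hv hvu
    have hbv : 0 ≤ a * v ^ 2 + b := by positivity
    have hs : (0:ℝ) ≤ Real.sqrt (a * v ^ 2 + b) + Real.sqrt a * (u - v) := by
      have h0 : 0 ≤ Real.sqrt a * (u - v) :=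
        mul_nonneg (Real.sqrt_nonneg a) (by linarith)
      exact add_nonneg (Real.sqrt_nonneg _) h0
    have h1 : Real.sqrt a * Real.sqrt a = a := Real.mul_self_sqrt ha
    have h2 : Real.sqrt (a * v ^ 2 + b) * Real.sqrt (a * v ^ 2 + b) = a * v ^ 2 + b :=
      Real.mul_self_sqrt hbv
    have h3 : Real.sqrt a * v ≤ Real.sqrt (a * v ^ 2 + b) := by
      rw [show Real.sqrt a * v = Real.sqrt (a * v ^ 2) by
        rw [Real.sqrt_mul ha, Real.sqrt_sq hv]]
      exact Real.sqrt_le_sqrt (by linarith)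
    calc Real.sqrt (a * u ^ 2 + b)
        ≤ Real.sqrt ((Real.sqrt (a * v ^ 2 + b) + Real.sqrt a * (u - v)) ^ 2) := by
          apply Real.sqrt_le_sqrt
          nlinarith [mul_nonneg (Real.sqrt_nonneg a) (sub_nonneg.2 hvu)]
      _ = _ := Real.sqrt_sq hs
  have h1 := key x y hx hy hxy
  have h2 : Real.sqrt (a * y ^ 2 + b) ≤ Real.sqrt (a * x ^ 2 + b) := by
    apply Real.sqrt_le_sqrt
    have hsq : y ^ 2 ≤ x ^ 2 := by nlinarith
    nlinarith [mul_le_mul_of_nonneg_left hsq ha]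
  rw [abs_of_nonneg (by linarith), abs_of_nonneg (by linarith)]
  linarith

theorem pooled_sd_ratio_bound (n1 n2 c1 c2 d1 d2 : ℝ)
    (hn1 : 0 < n1) (hn2 : 0 < n2) (hc1 : 0 ≤ c1) (hc2 : 0 ≤ c2)
    (hd1 : 0 < d1) (hd2 : 0 < d2) :
    |Real.sqrt ((n1 * c2 ^ 2 + n2 * c1 ^ 2) / (n1 * d2 ^ 2 + n2 * d1 ^ 2)) - 1| ≤
      |c1 / d1 - 1| + |c2 / d2 - 1| := by
  have hD2 : 0 < n1 * d2 ^ 2 + n2 * d1 ^ 2 := by positivity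
  have hN2 : 0 ≤ n1 * c2 ^ 2 + n2 * c1 ^ 2 := by positivity
  set N := Real.sqrt (n1 * c2 ^ 2 + n2 * c1 ^ 2) with hN
  set D := Real.sqrt (n1 * d2 ^ 2 + n2 * d1 ^ 2) with hD
  have hDpos : 0 < D := Real.sqrt_pos.2 hD2
  have hdiv : Real.sqrt ((n1 * c2 ^ 2 + n2 * c1 ^ 2) / (n1 * d2 ^ 2 + n2 * d1 ^ 2))
      = N / D := Real.sqrt_div hN2 _
  rw [hdiv]
  have step1 : |N - Real.sqrt (n1 * d2 ^ 2 + n2 * c1 ^ 2)| ≤ Real.sqrt n1 * |c2 - d2| :=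
    sqrt_quad_lip n1 (n2 * c1 ^ 2) c2 d2 hn1.le (by positivity) hc2 hd2.le
  have step2 : |Real.sqrt (n1 * d2 ^ 2 + n2 * c1 ^ 2) - D| ≤ Real.sqrt n2 * |c1 - d1| := by
    have := sqrt_quad_lip n2 (n1 * d2 ^ 2) c1 d1 hn2.le (by positivity) hc1 hd1.le
    rw [hD]
    rw [show n1 * d2 ^ 2 + n2 * c1 ^ 2 = n2 * c1 ^ 2 + n1 * d2 ^ 2 by ring,
        show n1 * d2 ^ 2 + n2 * d1 ^ 2 = n2 * d1 ^ 2 + n1 * d2 ^ 2 by ring]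
    exact this
  have hND : |N - D| ≤ Real.sqrt n1 * |c2 - d2| + Real.sqrt n2 * |c1 - d1| :=
    (abs_sub_le _ _ _).trans (add_le_add step1 step2)
  have hn1D : Real.sqrt n1 * d2 ≤ D := by
    rw [show Real.sqrt n1 * d2 = Real.sqrt (n1 * d2 ^ 2) by
      rw [Real.sqrt_mul hn1.le, Real.sqrt_sq hd2.le]]
    exact Real.sqrt_le_sqrt (by nlinarith)
  have hn2D : Real.sqrt n2 * d1 ≤ D := by
    rw [show Real.sqrt n2 * d1 = Real.sqrt (n2 * d1 ^ 2) by
      rw [Real.sqrt_mul hn2.le, Real.sqrt_sq hd1.le]]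
    exact Real.sqrt_le_sqrt (by nlinarith)
  have e1 : |c1 / d1 - 1| = |c1 - d1| / d1 := by
    rw [show c1 / d1 - 1 = (c1 - d1) / d1 by field_simp, abs_div, abs_of_pos hd1]
  have e2 : |c2 / d2 - 1| = |c2 - d2| / d2 := by
    rw [show c2 / d2 - 1 = (c2 - d2) / d2 by field_simp, abs_div, abs_of_pos hd2]
  have eL : |N / D - 1| = |N - D| / D := by
    rw [show N / D - 1 = (N - D) / D by field_simp, abs_div, abs_of_pos hDpos]
  rw [eL, e1, e2]
  rw [div_le_iff₀ hDpos]
  have t1 : Real.sqrt n1 * |c2 - d2| ≤ |c2 - d2| / d2 * D := by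
    rw [div_mul_eq_mul_div, le_div_iff₀ hd2]
    calc Real.sqrt n1 * |c2 - d2| * d2 = Real.sqrt n1 * d2 * |c2 - d2| := by ring
      _ ≤ D * |c2 - d2| := by
          exact mul_le_mul_of_nonneg_right hn1D (abs_nonneg _)
      _ = |c2 - d2| * D := by ring
  have t2 : Real.sqrt n2 * |c1 - d1| ≤ |c1 - d1| / d1 * D := by
    rw [div_mul_eq_mul_div, le_div_iff₀ hd1]
    calc Real.sqrt n2 * |c1 - d1| * d1 = Real.sqrt n2 * d1 * |c1 - d1| := by ring
      _ ≤ D * |c1 - d1| := mul_le_mul_of_nonneg_right hn2D (abs_nonneg _)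
      _ = |c1 - d1| * D := by ring
  calc |N - D| ≤ Real.sqrt n1 * |c2 - d2| + Real.sqrt n2 * |c1 - d1| := hND
    _ ≤ |c2 - d2| / d2 * D + |c1 - d1| / d1 * D := add_le_add t1 t2
    _ = (|c1 - d1| / d1 + |c2 - d2| / d2) * D := by ring
end

section
/- Let G be a distribution function on ℝ with at most countably many discontinuity points T₁, T₂, … with jump sizes r₁, r₂, …. Define the transformation R(t) = t + Σⱼ rⱼ·1{Tⱼ ≤ t}. If Y has distribution G and U is an independent uniform[0,1] variable, then Z = Y + Σⱼ rⱼ[1{Tⱼ < Y} + 1{Tⱼ = Y}·U] has a continuous distribution function H, and G(t) = H(R(t)) for all t ∈ ℝ. -/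
open MeasureTheory ProbabilityTheory Set

/-- Atom-spreading: if `Y` has distribution function `G` with discontinuity
points `T j` and jump sizes `r j`, `U` is an independent uniform `[0,1]`
variable, and `Z = Y + ∑ⱼ rⱼ (1{Tⱼ < Y} + 1{Tⱼ = Y} U)`, then `Z` has a
continuous distribution function `H` and `G(t) = H(R(t))` where
`R(t) = t + ∑ⱼ rⱼ 1{Tⱼ ≤ t}`. -/
theorem atom_spreading
    {Ω : Type*} [MeasurableSpace Ω] (μ : Measure Ω) [IsProbabilityMeasure μ]
    (Y U : Ω → ℝ) (hY : Measurable Y) (hU : Measurable U)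
    (ν : Measure ℝ) [IsProbabilityMeasure ν]
    (hYlaw : Measure.map Y μ = ν)
    (hUlaw : Measure.map U μ = volume.restrict (Icc (0:ℝ) 1))
    (hindep : IndepFun Y U μ)
    (T : ℕ → ℝ) (hTinj : Function.Injective T)
    (r : ℕ → ℝ) (hr : ∀ j, r j = (ν {T j}).toReal)
    (hcont : ∀ t ∉ Set.range T, ν {t} = 0)
    (R : ℝ → ℝ) (hR : ∀ t, R t = t + ∑' j, if T j ≤ t then r j else 0)
    (Z : Ω → ℝ)
    (hZ : ∀ ω, Z ω = Y ω + ∑' j,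
      r j * ((if T j < Y ω then (1:ℝ) else 0) +
             (if T j = Y ω then (1:ℝ) else 0) * U ω))
    (G H : ℝ → ℝ)
    (hG : ∀ t, G t = (ν (Iic t)).toReal)
    (hH : ∀ s, H s = (Measure.map Z μ (Iic s)).toReal) :
    Continuous H ∧ ∀ t, G t = H (R t) := by
  classical
  have hr0 : ∀ j, 0 ≤ r j := fun j => (hr j) ▸ ENNReal.toReal_nonneg
  -- summability of the jump sizes
  have hsum : Summable r := by
    have h1 : (∑' j, ν {T j}) ≠ ⊤ := by
      have he : (∑' j, ν {T j}) = ν (⋃ j, {T j}) := by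
        refine (measure_iUnion ?_ fun j => measurableSet_singleton _).symm
        intro i j hij
        simp only [Function.onFun, Set.disjoint_singleton]
        exact fun h => hij (hTinj h)
      rw [he]; exact (measure_lt_top ν _).ne
    exact (ENNReal.summable_toReal h1).congr fun j => (hr j).symm
  have hsumb : ∀ f : ℕ → ℝ, (∀ j, f j = 0 ∨ f j = r j) → Summable f := by
    intro f hf
    refine Summable.of_nonneg_of_le (g := f) (f := r) (fun j => ?_) (fun j => ?_) hsum
    · rcases hf j with h | h <;> simp [h, hr0 j]
    · rcases hf j with h | h <;> simp [h, hr0 j]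
  set S : ℝ → ℝ := fun t => ∑' j, if T j < t then r j else 0 with hSdef
  set a : ℝ → ℝ := fun t => ∑' j, if T j = t then r j else 0 with hadef
  have hif : ∀ (p : ℕ → Prop) [DecidablePred p],
      ∀ j, (if p j then r j else 0) = 0 ∨ (if p j then r j else 0) = r j := by
    intro p _ j; split_ifs <;> simp
  -- splitting the ≤ sum as < plus =
  have hsplit : ∀ t, (∑' j, if T j ≤ t then r j else 0) = S t + a t := by
    intro t
    have he : ∀ j, (if T j ≤ t then r j else 0)
        = (if T j < t then r j else 0) + (if T j = t then r j else 0) := by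
      intro j
      rcases lt_trichotomy (T j) t with h | h | h
      · simp [h, h.le, h.ne]
      · simp [h]
      · simp [h.not_ge, h.asymm, h.ne']
    rw [tsum_congr he, Summable.tsum_add (hsumb _ (hif _)) (hsumb _ (hif _))]
  have hRS : ∀ t, R t = t + (S t + a t) := fun t => by rw [hR t, hsplit t]
  -- identification of `a`
  have haν : ∀ t, a t = (ν {t}).toReal := by
    intro t
    by_cases ht : t ∈ Set.range T
    · obtain ⟨j0, rfl⟩ := ht
      rw [hadef]
      have := tsum_eq_single (L := SummationFilter.unconditional ℕ) (f := fun j => if T j = T j0 then r j else 0) j0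
        (fun j hj => by
          have : T j ≠ T j0 := fun h => hj (hTinj h)
          simp [this])
      simpa [hr j0] using this
    · have hz : ∀ j, (if T j = t then r j else 0) = 0 := by
        intro j
        have : T j ≠ t := fun h => ht ⟨j, h⟩
        simp [this]
      simp [hadef, hz, hcont t ht]
  have han : ∀ t, 0 ≤ a t := fun t => (haν t) ▸ ENNReal.toReal_nonneg
  -- monotonicity facts
  have hSmono : Monotone S := by
    intro s t hst
    refine Summable.tsum_le_tsum (fun j => ?_) (hsumb _ (hif _)) (hsumb _ (hif _))
    split_ifs with h1 h2
    · exact le_rfl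
    · exact absurd (h1.trans_le hst) h2
    · exact hr0 j
    · exact le_rfl
  have hle : ∀ y y', y < y' → S y + a y ≤ S y' := by
    intro y y' h
    rw [← hsplit y]
    refine Summable.tsum_le_tsum (fun j => ?_) (hsumb _ (hif _)) (hsumb _ (hif _))
    split_ifs with h1 h2
    · exact le_rfl
    · exact absurd (h1.trans_lt h) h2
    · exact hr0 j
    · exact le_rfl
  have hkey : ∀ y y', y < y' → R y < y' + S y' := by
    intro y y' h
    rw [hRS]
    have := hle y y' h
    linarith
  have hRmono : Monotone R := by
    intro s t hst
    rcases eq_or_lt_of_le hst with rfl | h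
    · exact le_rfl
    · have h1 := hkey s t h
      have h2 := han t
      rw [hRS t]; linarith
  -- rewriting Z
  have hZ' : ∀ ω, Z ω = Y ω + (S (Y ω) + a (Y ω) * U ω) := by
    intro ω
    rw [hZ ω]
    congr 1
    have he : ∀ j, r j * ((if T j < Y ω then (1:ℝ) else 0) +
        (if T j = Y ω then (1:ℝ) else 0) * U ω)
        = (if T j < Y ω then r j else 0) + (if T j = Y ω then r j else 0) * U ω := by
      intro j; split_ifs <;> ring
    rw [tsum_congr he, Summable.tsum_add (hsumb _ (hif _)) ((hsumb _ (hif _)).mul_right _),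
      tsum_mul_right]
  -- measurability
  have hameas : Measurable a := by
    have he : a = fun t => R t - t - S t := funext fun t => by rw [hRS t]; ring
    rw [he]
    exact (hRmono.measurable.sub measurable_id).sub hSmono.measurable
  have hZmeas : Measurable Z := by
    have he : Z = fun ω => Y ω + (S (Y ω) + a (Y ω) * U ω) := funext hZ'
    rw [he]
    exact hY.add ((hSmono.measurable.comp hY).add ((hameas.comp hY).mul hU))
  -- U is a.e. in [0,1]
  have hUnull : μ {ω | U ω ∉ Icc (0:ℝ) 1} = 0 := by
    have : {ω | U ω ∉ Icc (0:ℝ) 1} = U ⁻¹' (Icc (0:ℝ) 1)ᶜ := rfl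
    rw [this, ← Measure.map_apply hU measurableSet_Icc.compl, hUlaw,
      Measure.restrict_apply measurableSet_Icc.compl]
    simp
  have hUae : ∀ᵐ ω ∂μ, U ω ∈ Icc (0:ℝ) 1 := by
    rw [ae_iff]; exact hUnull
  -- main identity
  have hmain : ∀ t, G t = H (R t) := by
    intro t
    rw [hG, hH, ← hYlaw, Measure.map_apply hY measurableSet_Iic,
      Measure.map_apply hZmeas measurableSet_Iic]
    congr 1
    apply measure_congr
    rw [Filter.eventuallyEq_set]
    filter_upwards [hUae] with ω hω
    simp only [mem_preimage, mem_Iic]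
    constructor
    · intro h
      have h1 : a (Y ω) * U ω ≤ a (Y ω) := by
        nlinarith [han (Y ω), hω.1, hω.2]
      calc Z ω = Y ω + (S (Y ω) + a (Y ω) * U ω) := hZ' ω
        _ ≤ Y ω + (S (Y ω) + a (Y ω)) := by linarith
        _ = R (Y ω) := (hRS _).symm
        _ ≤ R t := hRmono h
    · intro hZle
      by_contra hty
      push_neg at hty
      have h1 : R t < Y ω + S (Y ω) := hkey t (Y ω) hty
      have h2 : Y ω + S (Y ω) ≤ Z ω := by
        rw [hZ' ω]
        nlinarith [han (Y ω), hω.1]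
      linarith
  -- no atoms for the law of Z
  haveI hPprob : IsProbabilityMeasure (Measure.map Z μ) :=
    Measure.isProbabilityMeasure_map hZmeas.aemeasurable
  have hnoatom : ∀ s, Measure.map Z μ {s} = 0 := by
    intro s
    rw [Measure.map_apply hZmeas (measurableSet_singleton s)]
    have huniq : ∀ y y', (y + S y ≤ s ∧ s ≤ R y) → (y' + S y' ≤ s ∧ s ≤ R y') → y = y' := by
      intro y y' h h'
      by_contra hne
      rcases (Ne.lt_or_gt hne) with hlt | hlt
      · have := hkey y y' hlt
        linarith [h.2, h'.1]
      · have := hkey y' y hlt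
        linarith [h'.2, h.1]
    have hmem : ∀ ω, U ω ∈ Icc (0:ℝ) 1 → Z ω = s →
        Y ω + S (Y ω) ≤ s ∧ s ≤ R (Y ω) := by
      intro ω hω hzs
      rw [hZ' ω] at hzs
      constructor
      · nlinarith [han (Y ω), hω.1]
      · rw [hRS]
        nlinarith [han (Y ω), hω.2]
    by_cases hex : ∃ y, y + S y ≤ s ∧ s ≤ R y
    · obtain ⟨y0, hy0⟩ := hex
      by_cases hay : a y0 = 0
      · have hν0 : ν {y0} = 0 := by
          have h1 := haν y0
          rw [hay] at h1
          have h2 : ν {y0} ≠ ⊤ := (measure_lt_top ν _).ne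
          exact (ENNReal.toReal_eq_zero_iff _).mp h1.symm |>.resolve_right h2
        have hss : {ω | Z ω = s} ⊆ (Y ⁻¹' {y0}) ∪ {ω | U ω ∉ Icc (0:ℝ) 1} := by
          intro ω hωZ
          by_cases hω : U ω ∈ Icc (0:ℝ) 1
          · left
            have := huniq (Y ω) y0 (hmem ω hω hωZ) hy0
            simpa using this
          · right; exact hω
        refine measure_mono_null hss (measure_union_null ?_ hUnull)
        rw [← Measure.map_apply hY (measurableSet_singleton y0), hYlaw]
        exact hν0
      · set c := (s - (y0 + S y0)) / a y0 with hc
        have hss : {ω | Z ω = s} ⊆ (U ⁻¹' {c}) ∪ {ω | U ω ∉ Icc (0:ℝ) 1} := by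
          intro ω hωZ
          by_cases hω : U ω ∈ Icc (0:ℝ) 1
          · left
            have hy : Y ω = y0 := huniq (Y ω) y0 (hmem ω hω hωZ) hy0
            have hzs : Z ω = s := hωZ
            rw [hZ' ω, hy] at hzs
            have : U ω = c := by
              rw [hc]
              field_simp
              linarith
            simpa using this
          · right; exact hω
        refine measure_mono_null hss (measure_union_null ?_ hUnull)
        rw [← Measure.map_apply hU (measurableSet_singleton c), hUlaw,
          Measure.restrict_apply (measurableSet_singleton c)]
        refine measure_mono_null (Set.inter_subset_left) ?_
        exact Real.volume_singleton
    · have hss : {ω | Z ω = s} ⊆ {ω | U ω ∉ Icc (0:ℝ) 1} := by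
        intro ω hωZ
        by_contra hω
        simp only [mem_setOf_eq, not_not] at hω
        exact hex ⟨Y ω, hmem ω hω hωZ⟩
      exact measure_mono_null hss hUnull
  -- continuity
  have hHcdf : H = (cdf (Measure.map Z μ) : ℝ → ℝ) := funext fun s => by
    rw [hH s, cdf_eq_real, measureReal_def]
  have hHcont : Continuous H := by
    rw [hHcdf, continuous_iff_continuousAt]
    intro x
    rw [(monotone_cdf (Measure.map Z μ)).continuousAt_iff_leftLim_eq_rightLim,
      (cdf (Measure.map Z μ)).rightLim_eq]
    have h1 := (cdf (Measure.map Z μ)).measure_singleton x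
    rw [measure_cdf (Measure.map Z μ), hnoatom x] at h1
    have h2 : cdf (Measure.map Z μ) x - Function.leftLim (cdf (Measure.map Z μ)) x ≤ 0 :=
      ENNReal.ofReal_eq_zero.mp h1.symm
    have h3 : Function.leftLim (cdf (Measure.map Z μ)) x ≤ cdf (Measure.map Z μ) x :=
      (monotone_cdf (Measure.map Z μ)).leftLim_le le_rfl
    linarith
  exact ⟨hHcont, hmain⟩
end
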